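/- Let u : ℤ × ℝ → ℝ, (n,t) ↦ u_n(t), with each u_n differentiable, be a solution of the reduced YdKN equation: for all n ∈ ℤ and t ∈ ℝ, u_{n+1}(t) ≠ u_{n-1}(t) and u_n'(t) = u_n(t)² u_{n+1}(t) u_{n-1}(t)/(u_{n+1}(t) − u_{n-1}(t)). Then for every λ ∈ ℝ the function v_n(t) := e^{(−1)ⁿλ} u_n(t) is again a solution: for all n and t, v_{n+1}(t) ≠ v_{n-1}(t) and v_n'(t) = v_n(t)² v_{n+1}(t) v_{n-1}(t)/(v_{n+1}(t) − v_{n-1}(t)). -/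

import Mathlib

/-- The symmetry group generated by `X₅ = (−1)ⁿuₙ∂_{uₙ}` maps solutions of the reduced
YdKN equation `u̇ₙ = uₙ² uₙ₊₁ uₙ₋₁/(uₙ₊₁ − uₙ₋₁)` to solutions: if `uₙ(t)` is a solution
then, for every `λ`, `vₙ(t) = e^{(−1)ⁿλ} uₙ(t)` is again a solution. -/
theorem ydkn_symmetry_X5 (u : ℤ → ℝ → ℝ) (hu : ∀ n, Differentiable ℝ (u n))
    (hsol : ∀ (n : ℤ) (t : ℝ), u (n + 1) t ≠ u (n - 1) t ∧
      deriv (u n) t =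
        (u n t) ^ 2 * u (n + 1) t * u (n - 1) t / (u (n + 1) t - u (n - 1) t)) :
    ∀ (lam : ℝ) (n : ℤ) (t : ℝ),
      let v : ℤ → ℝ → ℝ := fun m s => Real.exp ((-1 : ℝ) ^ m * lam) * u m s
      v (n + 1) t ≠ v (n - 1) t ∧
        deriv (v n) t =
          (v n t) ^ 2 * v (n + 1) t * v (n - 1) t / (v (n + 1) t - v (n - 1) t) := by
  intro lam n t v
  obtain ⟨hne, hder⟩ := hsol n t
  have h1 : ((-1 : ℝ) ^ (n + 1) : ℝ) = -((-1 : ℝ) ^ n) := by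
    rw [zpow_add_one₀ (by norm_num : (-1 : ℝ) ≠ 0)]; ring
  have h2 : ((-1 : ℝ) ^ (n - 1) : ℝ) = -((-1 : ℝ) ^ n) := by
    rw [zpow_sub_one₀ (by norm_num : (-1 : ℝ) ≠ 0)]; ring
  set a : ℝ := (-1 : ℝ) ^ n * lam with ha
  have hv1 : v (n + 1) t = Real.exp (-a) * u (n + 1) t := by
    simp only [v, h1]; ring_nf; rw [ha]; ring
  have hv2 : v (n - 1) t = Real.exp (-a) * u (n - 1) t := by
    simp only [v, h2]; ring_nf; rw [ha]; ring
  have hvn : v n t = Real.exp a * u n t := rfl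
  have hexp : Real.exp (-a) ≠ 0 := Real.exp_ne_zero _
  constructor
  · rw [hv1, hv2]
    exact fun h => hne (mul_left_cancel₀ hexp h)
  · have hdv : deriv (v n) t = Real.exp a * deriv (u n) t := by
      simp only [v]
      rw [deriv_const_mul _ ((hu n).differentiableAt)]
    rw [hdv, hder, hv1, hv2, hvn]
    have hd : u (n + 1) t - u (n - 1) t ≠ 0 := sub_ne_zero_of_ne hne
    have : Real.exp (-a) * u (n + 1) t - Real.exp (-a) * u (n - 1) t
        = Real.exp (-a) * (u (n + 1) t - u (n - 1) t) := by ring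
    rw [this]
    rw [Real.exp_neg]
    have he : Real.exp a ≠ 0 := Real.exp_ne_zero _
    field_simp
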